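/- Suppose the weight matrix W of a network (V, W) is symmetric, and let Φ(x) = (1/2) Σ_{i,j∈V} W_ij x_i x_j + Σ_{i∈V} h_i x_i. Then there exists a globally BR-stable set N̄ of strategy profiles of the signed network coordination game on (V, W) with external field h such that argmax_{x∈A^V} Φ(x) ⊆ N̄ ⊆ N, where N is the set of Nash equilibria. -/

import Mathlib

open Finset Function

noncomputable section

/-- The binary action set `A = {−1, +1}`, as a subtype of `ℝ`. -/
abbrev Act : Type := {r : ℝ // r = 1 ∨ r = -1}

def onePt : Act := ⟨1, Or.inl rfl⟩

def negOnePt : Act := ⟨-1, Or.inr rfl⟩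

def actMul (a b : Act) : Act :=
  ⟨(a : ℝ) * (b : ℝ), by rcases a.2 with h1 | h1 <;> rcases b.2 with h2 | h2 <;> norm_num [h1, h2]⟩

def actNeg (a : Act) : Act :=
  ⟨-(a : ℝ), by rcases a.2 with h1 | h1 <;> norm_num [h1]⟩

/-- Utility of player `i` in the SNC game on the network `(V, W)` with external field `h`. -/
def utility {V : Type*} [Fintype V] (W : V → V → ℝ) (h : V → ℝ) (i : V) (x : V → Act) : ℝ :=
  h i * (x i : ℝ) + (x i : ℝ) * ∑ j, W i j * (x j : ℝ)

/-- Best response set of player `i` (depends only on `x_{−i}`). -/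
def bestResponse {V : Type*} [Fintype V] [DecidableEq V] (W : V → V → ℝ) (h : V → ℝ)
    (i : V) (x : V → Act) : Set Act :=
  {a | ∀ b : Act, utility W h i (Function.update x i b) ≤ utility W h i (Function.update x i a)}

/-- Nash equilibrium of the SNC game. -/
def IsNash {V : Type*} [Fintype V] [DecidableEq V] (W : V → V → ℝ) (h : V → ℝ)
    (x : V → Act) : Prop :=
  ∀ i, x i ∈ bestResponse W h i x

/-- One step of a best-response path. -/
def BRStep {V : Type*} [Fintype V] [DecidableEq V] (W : V → V → ℝ) (h : V → ℝ)
    (x y : V → Act) : Prop :=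
  ∃ i, (∀ j, j ≠ i → y j = x j) ∧ y i ≠ x i ∧ y i ∈ bestResponse W h i x

def GloballyBRReachable {V : Type*} [Fintype V] [DecidableEq V] (W : V → V → ℝ) (h : V → ℝ)
    (X : Set (V → Act)) : Prop :=
  ∀ x : V → Act, ∃ y ∈ X, Relation.ReflTransGen (BRStep W h) x y

def BRInvariant {V : Type*} [Fintype V] [DecidableEq V] (W : V → V → ℝ) (h : V → ℝ)
    (X : Set (V → Act)) : Prop :=
  ∀ x ∈ X, ∀ y, Relation.ReflTransGen (BRStep W h) x y → y ∈ X

def GloballyBRStable {V : Type*} [Fintype V] [DecidableEq V] (W : V → V → ℝ) (h : V → ℝ)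
    (X : Set (V → Act)) : Prop :=
  GloballyBRReachable W h X ∧ BRInvariant W h X

/-- Structural balance of a signed weight matrix. -/
def StructurallyBalanced {V : Type*} (W : V → V → ℝ) : Prop :=
  ∃ P : Set V, (∀ i j, (i ∈ P ↔ j ∈ P) → 0 ≤ W i j) ∧ (∀ i j, ¬(i ∈ P ↔ j ∈ P) → W i j ≤ 0)

/-- `(h^−, h^+)`-indecomposability of a network. -/
def Indecomposable {V : Type*} [Fintype V] [DecidableEq V] (W : V → V → ℝ)
    (hm hp : V → ℝ) : Prop :=
  ∀ P M : Finset V, P ∪ M = Finset.univ → Disjoint P M → P.Nonempty → M.Nonempty →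
    (∃ i ∈ P, ∑ j ∈ P, |W i j| + hp i < ∑ j ∈ M, |W i j|) ∨
    (∃ i ∈ M, (∑ j ∈ M, |W i j|) - hm i < ∑ j ∈ P, |W i j|)


section SNCHelpers

variable {V : Type*} [Fintype V] [DecidableEq V]

lemma act_two {a b c : Act} (h1 : a ≠ c) (h2 : b ≠ c) : a = b := by
  rcases a with ⟨av, ha⟩; rcases b with ⟨bv, hb⟩; rcases c with ⟨cv, hc⟩
  apply Subtype.ext
  simp only [ne_eq, Subtype.mk.injEq] at h1 h2 ⊢
  rcases ha with ha | ha <;> rcases hb with hb | hb <;> rcases hc with hc | hc <;>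
    subst ha <;> subst hb <;> subst hc <;> simp_all

instance : Finite Act := by
  apply Finite.of_injective (fun a : Act => ((a : ℝ) = 1 : Prop))
  intro a b hab
  simp only at hab
  rcases a.2 with h1 | h1 <;> rcases b.2 with h2 | h2 <;>
    apply Subtype.ext <;> rw [h1, h2] <;>
    rw [h1, h2, eq_iff_iff] at hab <;> norm_num at hab

lemma sum_row_update (W : V → V → ℝ) (hdiag : ∀ i, W i i = 0) (i : V) (x : V → Act) (a : Act) :
    ∑ j, W i j * ((Function.update x i a j : Act) : ℝ) = ∑ j, W i j * ((x j : Act) : ℝ) := by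
  refine Finset.sum_congr rfl fun j _ => ?_
  by_cases hj : j = i
  · subst hj; simp [hdiag]
  · rw [Function.update_of_ne hj]

lemma key_decomp (W : V → V → ℝ) (hdiag : ∀ i, W i i = 0)
    (hsymm : ∀ i j, W i j = W j i) (i : V) (z : V → Act) :
    (∑ k, ∑ j, W k j * (z k : ℝ) * (z j : ℝ))
      = (∑ k ∈ Finset.univ.erase i, ∑ j ∈ Finset.univ.erase i,
          W k j * (z k : ℝ) * (z j : ℝ))
        + 2 * (z i : ℝ) * ∑ j, W i j * (z j : ℝ) := by
  have e1 : ∑ k ∈ Finset.univ.erase i, W i k * (z k : ℝ)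
      = ∑ j, W i j * (z j : ℝ) := by
    rw [← Finset.sum_erase_add Finset.univ _ (Finset.mem_univ i), hdiag, zero_mul, add_zero]
  have e2 : ∀ k, (∑ j, W k j * (z k : ℝ) * (z j : ℝ))
      = (∑ j ∈ Finset.univ.erase i, W k j * (z k : ℝ) * (z j : ℝ))
        + W k i * (z k : ℝ) * (z i : ℝ) := fun k =>
    (Finset.sum_erase_add Finset.univ _ (Finset.mem_univ i)).symm
  rw [← Finset.sum_erase_add Finset.univ
    (fun k => ∑ j, W k j * (z k : ℝ) * (z j : ℝ)) (Finset.mem_univ i)]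
  have e3 : ∑ k ∈ Finset.univ.erase i, ∑ j, W k j * (z k : ℝ) * (z j : ℝ)
      = (∑ k ∈ Finset.univ.erase i, ∑ j ∈ Finset.univ.erase i,
          W k j * (z k : ℝ) * (z j : ℝ))
        + ∑ k ∈ Finset.univ.erase i, W k i * (z k : ℝ) * (z i : ℝ) := by
    rw [← Finset.sum_add_distrib]
    exact Finset.sum_congr rfl fun k _ => e2 k
  have e4 : ∑ k ∈ Finset.univ.erase i, W k i * (z k : ℝ) * (z i : ℝ)
      = (z i : ℝ) * ∑ j, W i j * (z j : ℝ) := by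
    rw [← e1, Finset.mul_sum]
    exact Finset.sum_congr rfl fun k _ => by rw [hsymm k i]; ring
  have e5 : ∑ j, W i j * (z i : ℝ) * (z j : ℝ)
      = (z i : ℝ) * ∑ j, W i j * (z j : ℝ) := by
    rw [Finset.mul_sum]
    exact Finset.sum_congr rfl fun j _ => by ring
  rw [e3, e4, e5]; ring

lemma phi_diff (W : V → V → ℝ) (h : V → ℝ) (hdiag : ∀ i, W i i = 0)
    (hsymm : ∀ i j, W i j = W j i)
    (Φ : (V → Act) → ℝ)
    (hΦ : ∀ x : V → Act,
      Φ x = (1 / 2) * ∑ i, ∑ j, W i j * (x i : ℝ) * (x j : ℝ)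
            + ∑ i, h i * (x i : ℝ))
    (i : V) (x : V → Act) (a : Act) :
    Φ (Function.update x i a) - Φ x
      = utility W h i (Function.update x i a) - utility W h i x := by
  set y := Function.update x i a with hy
  have hyi : (y i : ℝ) = (a : ℝ) := by rw [hy, Function.update_self]
  have hcy : ∑ j, W i j * (y j : ℝ) = ∑ j, W i j * (x j : ℝ) :=
    sum_row_update W hdiag i x a
  have hTy : (∑ k ∈ Finset.univ.erase i, ∑ j ∈ Finset.univ.erase i,
        W k j * (y k : ℝ) * (y j : ℝ))
      = (∑ k ∈ Finset.univ.erase i, ∑ j ∈ Finset.univ.erase i,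
        W k j * (x k : ℝ) * (x j : ℝ)) := by
    refine Finset.sum_congr rfl fun k hk => Finset.sum_congr rfl fun j hj => ?_
    rw [hy, Function.update_of_ne (Finset.mem_erase.mp hk).1,
      Function.update_of_ne (Finset.mem_erase.mp hj).1]
  have hH : (∑ k, h k * (y k : ℝ)) - ∑ k, h k * (x k : ℝ)
      = h i * ((a : ℝ) - (x i : ℝ)) := by
    rw [← Finset.sum_sub_distrib, Finset.sum_eq_single i]
    · rw [hyi]; ring
    · intro k _ hk
      rw [hy, Function.update_of_ne hk, sub_self]
    · intro hcon; exact absurd (Finset.mem_univ i) hcon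
  have hSy := key_decomp W hdiag hsymm i y
  have hSx := key_decomp W hdiag hsymm i x
  rw [hTy, hcy, hyi] at hSy
  have hu : utility W h i y - utility W h i x
      = (h i + ∑ j, W i j * (x j : ℝ)) * ((a : ℝ) - (x i : ℝ)) := by
    unfold utility
    rw [hyi, hcy]; ring
  rw [hΦ y, hΦ x, hSy, hSx, hu]
  linarith [hH]

lemma brstep_phi_le (W : V → V → ℝ) (h : V → ℝ) (hdiag : ∀ i, W i i = 0)
    (hsymm : ∀ i j, W i j = W j i)
    (Φ : (V → Act) → ℝ)
    (hΦ : ∀ x : V → Act,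
      Φ x = (1 / 2) * ∑ i, ∑ j, W i j * (x i : ℝ) * (x j : ℝ)
            + ∑ i, h i * (x i : ℝ))
    {x y : V → Act} (hstep : BRStep W h x y) : Φ x ≤ Φ y := by
  obtain ⟨i, hoff, hne, hbr⟩ := hstep
  have hyx : y = Function.update x i (y i) := by
    funext j
    by_cases hj : j = i
    · subst hj; rw [Function.update_self]
    · rw [Function.update_of_ne hj, hoff j hj]
  have hd := phi_diff W h hdiag hsymm Φ hΦ i x (y i)
  rw [← hyx] at hd
  have := hbr (x i)
  rw [Function.update_eq_self, ← hyx] at this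
  linarith

lemma brpath_phi_le (W : V → V → ℝ) (h : V → ℝ) (hdiag : ∀ i, W i i = 0)
    (hsymm : ∀ i j, W i j = W j i)
    (Φ : (V → Act) → ℝ)
    (hΦ : ∀ x : V → Act,
      Φ x = (1 / 2) * ∑ i, ∑ j, W i j * (x i : ℝ) * (x j : ℝ)
            + ∑ i, h i * (x i : ℝ))
    {x y : V → Act} (hpath : Relation.ReflTransGen (BRStep W h) x y) : Φ x ≤ Φ y := by
  induction hpath with
  | refl => exact le_refl _
  | tail _ hstep ih => exact le_trans ih (brstep_phi_le W h hdiag hsymm Φ hΦ hstep)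

lemma brstep_reverse (W : V → V → ℝ) (h : V → ℝ) (hdiag : ∀ i, W i i = 0)
    (hsymm : ∀ i j, W i j = W j i)
    (Φ : (V → Act) → ℝ)
    (hΦ : ∀ x : V → Act,
      Φ x = (1 / 2) * ∑ i, ∑ j, W i j * (x i : ℝ) * (x j : ℝ)
            + ∑ i, h i * (x i : ℝ))
    {x y : V → Act} (hstep : BRStep W h x y) (hle : Φ y ≤ Φ x) : BRStep W h y x := by
  obtain ⟨i, hoff, hne, hbr⟩ := hstep
  have hyx : y = Function.update x i (y i) := by
    funext j
    by_cases hj : j = i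
    · subst hj; rw [Function.update_self]
    · rw [Function.update_of_ne hj, hoff j hj]
  have hd := phi_diff W h hdiag hsymm Φ hΦ i x (y i)
  rw [← hyx] at hd
  have hux : utility W h i x ≤ utility W h i y := by
    have := hbr (x i)
    rwa [Function.update_eq_self, ← hyx] at this
  have huyx : utility W h i y = utility W h i x := by linarith
  refine ⟨i, fun j hj => (hoff j hj).symm, fun hcon => hne hcon.symm, ?_⟩
  intro c
  have hupd : ∀ b : Act, Function.update y i b = Function.update x i b := by
    intro b
    funext j
    by_cases hj : j = i
    · subst hj; rw [Function.update_self, Function.update_self]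
    · rw [Function.update_of_ne hj, Function.update_of_ne hj, hoff j hj]
  rw [hupd c, hupd (x i), Function.update_eq_self]
  calc utility W h i (Function.update x i c) ≤ utility W h i (Function.update x i (y i)) :=
        hbr c
    _ = utility W h i y := by rw [← hyx]
    _ = utility W h i x := huyx

end SNCHelpers


theorem stmt2 {V : Type*} [Fintype V] [DecidableEq V] [Nonempty V]
    (W : V → V → ℝ) (h : V → ℝ) (hdiag : ∀ i, W i i = 0)
    (hsymm : ∀ i j, W i j = W j i)
    (Φ : (V → Act) → ℝ)
    (hΦ : ∀ x : V → Act,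
      Φ x = (1 / 2) * ∑ i, ∑ j, W i j * (x i : ℝ) * (x j : ℝ)
            + ∑ i, h i * (x i : ℝ)) :
    ∃ Nbar : Set (V → Act), GloballyBRStable W h Nbar ∧
      {x : V → Act | ∀ y : V → Act, Φ y ≤ Φ x} ⊆ Nbar ∧
      Nbar ⊆ {x : V → Act | IsNash W h x} := by
  classical
  set R := Relation.ReflTransGen (BRStep W h) with hR
  set Nbar : Set (V → Act) := {x | ∀ y, R x y → R y x} with hNbar
  have hmono : ∀ {x y : V → Act}, R x y → Φ x ≤ Φ y :=
    fun hp => brpath_phi_le W h hdiag hsymm Φ hΦ hp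
  refine ⟨Nbar, ⟨?_, ?_⟩, ?_, ?_⟩
  · -- globally reachable
    have reach : ∀ n (x : V → Act), ({z | R x z}).ncard ≤ n → ∃ y ∈ Nbar, R x y := by
      intro n
      induction n with
      | zero =>
        intro x hx
        exfalso
        have : 0 < ({z | R x z}).ncard :=
          Set.ncard_pos (Set.toFinite _) |>.mpr ⟨x, Relation.ReflTransGen.refl⟩
        omega
      | succ n ih =>
        intro x hx
        by_cases hxm : x ∈ Nbar
        · exact ⟨x, hxm, Relation.ReflTransGen.refl⟩
        · simp only [hNbar, Set.mem_setOf_eq, not_forall] at hxm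
          obtain ⟨z, hz1, hz2⟩ := hxm
          have hss : {w | R z w} ⊂ {w | R x w} := by
            constructor
            · exact fun w hw => hz1.trans hw
            · intro hcon
              exact hz2 (hcon (show x ∈ {w | R x w} from Relation.ReflTransGen.refl))
          have hlt : ({w | R z w}).ncard < ({w | R x w}).ncard :=
            Set.ncard_lt_ncard hss (Set.toFinite _)
          obtain ⟨y, hy, hzy⟩ := ih z (by omega)
          exact ⟨y, hy, hz1.trans hzy⟩
    exact fun x => reach ({z | R x z}).ncard x le_rfl
  · -- invariant
    intro x hx y hxy z hyz
    exact (hx z (hxy.trans hyz)).trans hxy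
  · -- maximizers ⊆ Nbar
    intro x hmax
    intro y hxy
    induction hxy with
    | refl => exact Relation.ReflTransGen.refl
    | @tail b c hpath hstep ih =>
      have hb : Φ b = Φ x := le_antisymm (hmax b) (hmono hpath)
      have hc : Φ c ≤ Φ b := (hmax c).trans hb.symm.le
      have rev := brstep_reverse W h hdiag hsymm Φ hΦ hstep hc
      exact Relation.ReflTransGen.head rev ih
  · -- Nbar ⊆ Nash
    intro x hx i b
    rw [Function.update_eq_self]
    by_contra hcon
    push_neg at hcon
    have hbne : b ≠ x i := by
      intro hbe
      rw [hbe, Function.update_eq_self] at hcon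
      exact lt_irrefl _ hcon
    set y := Function.update x i b with hy
    have hstep : BRStep W h x y := by
      refine ⟨i, fun j hj => Function.update_of_ne hj _ _, ?_, ?_⟩
      · rw [hy, Function.update_self]; exact hbne
      · rw [hy, Function.update_self]
        intro c
        by_cases hc : c = b
        · subst hc; exact le_refl _
        · have : c = x i := act_two hc hbne.symm
          rw [this, Function.update_eq_self]
          exact hcon.le
    have hRxy : R x y := Relation.ReflTransGen.single hstep
    have hRyx : R y x := hx y hRxy
    have h1 : Φ y ≤ Φ x := hmono hRyx
    have hd := phi_diff W h hdiag hsymm Φ hΦ i x b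
    rw [← hy] at hd
    linarith
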